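/- If removing an edge (x,y) from a decomposable (chordal) graph G yields a chordal graph, then x and y are contained in exactly one maximal clique of G; conversely, if x and y lie in exactly one common maximal clique of G, then G minus the edge (x,y) is chordal. -/

import Mathlib

/-- A graph is chordal (decomposable) if every cycle of length at least four has a
chord: a pair of vertices of the cycle that are adjacent in the graph but whose
edge is not an edge of the cycle. -/
def IsChordal {V : Type*} (G : SimpleGraph V) : Prop :=
  ∀ ⦃v : V⦄ (c : G.Walk v v), c.IsCycle → 4 ≤ c.length →
    ∃ u w : V, G.Adj u w ∧ u ∈ c.support ∧ w ∈ c.support ∧ s(u, w) ∉ c.edges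

/-- A maximal clique of `G`. -/
def IsMaxClique {V : Type*} (G : SimpleGraph V) (s : Set V) : Prop :=
  G.IsClique s ∧ ∀ t : Set V, G.IsClique t → s ⊆ t → s = t

open SimpleGraph

/-- Any clique extends to a maximal clique (finite vertex type). -/
lemma exists_maxClique_superset {V : Type*} [Fintype V] (G : SimpleGraph V) {c : Set V}
    (hc : G.IsClique c) : ∃ s, IsMaxClique G s ∧ c ⊆ s := by
  obtain ⟨s, hs, hmax⟩ := Set.Finite.exists_maximalFor id {t : Set V | G.IsClique t ∧ c ⊆ t}
    (Set.toFinite _) ⟨c, hc, subset_rfl⟩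
  exact ⟨s, ⟨hs.1, fun t ht hst => hst.antisymm (hmax ⟨ht, hs.2.trans hst⟩ hst)⟩, hs.2⟩

/-- A walk of length two is a path through a middle vertex. -/
lemma walk_length_two {V : Type*} {G : SimpleGraph V} {x y : V} (r : G.Walk x y)
    (h : r.length = 2) :
    ∃ a, ∃ (h1 : G.Adj x a) (h2 : G.Adj a y),
      r = SimpleGraph.Walk.cons h1 (SimpleGraph.Walk.cons h2 SimpleGraph.Walk.nil) := by
  match r with
  | .nil => simp at h
  | .cons h1 .nil => simp at h
  | .cons h1 (.cons h2 .nil) => exact ⟨_, h1, h2, rfl⟩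
  | .cons h1 (.cons h2 (.cons h3 r3)) => simp [SimpleGraph.Walk.length_cons] at h

/-- In a closed nonempty walk every support vertex is in the tail of the support. -/
lemma mem_tail_support_of_closed {V : Type*} {G : SimpleGraph V} {v u : V} (c : G.Walk v v)
    (hnil : c ≠ SimpleGraph.Walk.nil) (h : u ∈ c.support) : u ∈ c.support.tail := by
  match c with
  | .nil => exact absurd rfl hnil
  | .cons h' q =>
    rw [SimpleGraph.Walk.support_cons] at h
    rcases List.mem_cons.mp h with rfl | h
    · simpa using q.end_mem_support
    · simpa using h

/-- Key lemma: a chordless-ish path between the endpoints of the deleted edge has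
length exactly two. -/
lemma key_path_length {V : Type*} {G : SimpleGraph V} (hG : IsChordal G) {x y : V}
    (hxy : G.Adj x y) (r : (G.deleteEdges {s(x, y)}).Walk x y) (hr : r.support.Nodup)
    (hcond : ∀ u w, G.Adj u w → u ∈ r.support → w ∈ r.support →
      s(u, w) ∈ r.edges ∨ s(u, w) = s(x, y)) :
    r.length = 2 := by
  have hne3 : ¬ 3 ≤ r.length := by
    intro h3
    have hsub : ∀ e ∈ r.edges, e ∈ G.edgeSet := fun e he =>
      (edgeSet_mono (G.deleteEdges_le _)) (r.edges_subset_edgeSet he)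
    have hr'path : (r.transfer G hsub).IsPath :=
      SimpleGraph.Walk.IsPath.mk' (by rwa [SimpleGraph.Walk.support_transfer])
    have hxyE : s(y, x) ∉ (r.transfer G hsub).edges := by
      rw [SimpleGraph.Walk.edges_transfer]
      intro hmem
      have hadj := SimpleGraph.Walk.adj_of_mem_edges r hmem
      rw [SimpleGraph.deleteEdges_adj] at hadj
      exact hadj.2 (by simp [Sym2.eq_swap])
    have hd : (SimpleGraph.Walk.cons hxy.symm (r.transfer G hsub)).IsCycle :=
      (SimpleGraph.Walk.cons_isCycle_iff _ hxy.symm).mpr ⟨hr'path, hxyE⟩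
    obtain ⟨u, w, huw, hu, hw, hne⟩ := hG _ hd
      (by simp only [SimpleGraph.Walk.length_cons, SimpleGraph.Walk.length_transfer]; omega)
    have hu' : u ∈ r.support := by
      rw [SimpleGraph.Walk.support_cons, SimpleGraph.Walk.support_transfer] at hu
      rcases List.mem_cons.mp hu with rfl | h
      · exact r.end_mem_support
      · exact h
    have hw' : w ∈ r.support := by
      rw [SimpleGraph.Walk.support_cons, SimpleGraph.Walk.support_transfer] at hw
      rcases List.mem_cons.mp hw with rfl | h
      · exact r.end_mem_support
      · exact h
    have hde : (SimpleGraph.Walk.cons hxy.symm (r.transfer G hsub)).edges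
        = s(y, x) :: r.edges := by
      rw [SimpleGraph.Walk.edges_cons, SimpleGraph.Walk.edges_transfer]
    rcases hcond u w huw hu' hw' with h | h
    · exact hne (by rw [hde]; exact List.mem_cons_of_mem _ h)
    · exact hne (by rw [hde, h, Sym2.eq_swap]; exact List.mem_cons_self)
  match r, hne3 with
  | .nil, _ => exact absurd rfl hxy.ne
  | .cons h .nil, _ =>
    rw [SimpleGraph.deleteEdges_adj] at h
    exact absurd (by simp) h.2
  | .cons h1 (.cons h2 r2), hne3 =>
    simp only [SimpleGraph.Walk.length_cons] at hne3 ⊢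
    omega


/-- A 4-cycle `x a y b` with `a,b` non-adjacent contradicts chordality of the
graph with the edge `xy` deleted. -/
lemma four_cycle_no_chord {V : Type*} {G : SimpleGraph V} {x y a b : V}
    (hch : IsChordal (G.deleteEdges {s(x, y)})) (hxy : G.Adj x y)
    (h1 : (G.deleteEdges {s(x, y)}).Adj x a) (h2 : (G.deleteEdges {s(x, y)}).Adj a y)
    (h3 : (G.deleteEdges {s(x, y)}).Adj y b) (h4 : (G.deleteEdges {s(x, y)}).Adj b x)
    (hab : a ≠ b) (hnab : ¬ G.Adj a b) : False := by
  have hax : a ≠ x := h1.ne'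
  have hay : a ≠ y := h2.ne
  have hby : b ≠ y := h3.ne'
  have hbx : b ≠ x := h4.ne
  have hxyne : x ≠ y := hxy.ne
  have hWcyc : (SimpleGraph.Walk.cons h1 (SimpleGraph.Walk.cons h2 (SimpleGraph.Walk.cons h3
      (SimpleGraph.Walk.cons h4 SimpleGraph.Walk.nil)))).IsCycle := by
    rw [SimpleGraph.Walk.isCycle_def]
    refine ⟨?_, by simp, ?_⟩
    · rw [SimpleGraph.Walk.isTrail_def]
      simp only [SimpleGraph.Walk.edges_cons, SimpleGraph.Walk.edges_nil]
      simp only [List.nodup_cons, List.mem_cons, List.not_mem_nil, or_false, List.nodup_nil,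
        and_true, not_or, Sym2.eq_iff]
      push_neg
      refine ⟨⟨?_, ?_, ?_⟩, ⟨?_, ?_⟩, ?_⟩ <;> tauto
    · simp only [SimpleGraph.Walk.support_cons, SimpleGraph.Walk.support_nil]
      simp only [List.tail_cons, List.nodup_cons, List.mem_cons, List.not_mem_nil, or_false,
        List.nodup_nil, and_true, not_or]
      tauto
  obtain ⟨u, w, huw, hu, hw, hne⟩ := hch _ hWcyc (by simp)
  simp only [SimpleGraph.Walk.support_cons, SimpleGraph.Walk.support_nil, List.mem_cons,
    List.not_mem_nil, or_false] at hu hw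
  simp only [SimpleGraph.Walk.edges_cons, SimpleGraph.Walk.edges_nil, List.mem_cons,
    List.not_mem_nil, or_false, not_or] at hne
  rw [SimpleGraph.deleteEdges_adj] at huw
  obtain ⟨hGuw, hsne⟩ := huw
  rw [Set.mem_singleton_iff] at hsne
  rcases hu with rfl | rfl | rfl | rfl | rfl <;> rcases hw with rfl | rfl | rfl | rfl | rfl <;>
    first
      | exact hGuw.ne rfl
      | exact hsne rfl
      | exact hsne Sym2.eq_swap
      | exact hnab hGuw
      | exact hnab hGuw.symm
      | exact hne.1 rfl
      | exact hne.1 Sym2.eq_swap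
      | exact hne.2.1 rfl
      | exact hne.2.1 Sym2.eq_swap
      | exact hne.2.2.1 rfl
      | exact hne.2.2.1 Sym2.eq_swap
      | exact hne.2.2.2 rfl
      | exact hne.2.2.2 Sym2.eq_swap


theorem chordal_deleteEdge_iff_unique_maxClique {V : Type*} [Fintype V]
    (G : SimpleGraph V) (hG : IsChordal G) (x y : V) (hxy : G.Adj x y) :
    IsChordal (G.deleteEdges {s(x, y)}) ↔
      ∃! s : Set V, IsMaxClique G s ∧ x ∈ s ∧ y ∈ s := by
  have hHadj : ∀ u w : V, (G.deleteEdges {s(x, y)}).Adj u w ↔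
      G.Adj u w ∧ s(u, w) ≠ s(x, y) := by
    intro u w; rw [SimpleGraph.deleteEdges_adj]; simp
  constructor
  · -- chordal deletion ⇒ unique maximal clique
    intro hch
    have hclxy : G.IsClique {x, y} := isClique_pair.mpr fun _ => hxy
    obtain ⟨s, hs, hsub⟩ := exists_maxClique_superset G hclxy
    have claim : ∀ s₁ s₂ : Set V, (IsMaxClique G s₁ ∧ x ∈ s₁ ∧ y ∈ s₁) →
        (IsMaxClique G s₂ ∧ x ∈ s₂ ∧ y ∈ s₂) → s₁ ⊆ s₂ := by
      rintro s₁ s₂ ⟨hs₁, hx₁, hy₁⟩ ⟨hs₂, hx₂, hy₂⟩ a ha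
      by_contra hat
      -- insert a s₂ is not a clique
      have hnc : ¬ G.IsClique (insert a s₂) := by
        intro h
        exact hat ((hs₂.2 _ h (Set.subset_insert _ _)) ▸ Set.mem_insert a s₂)
      rw [isClique_insert] at hnc
      push_neg at hnc
      obtain ⟨b, hb, hab, hnab⟩ := hnc hs₂.1
      have hax : a ≠ x := fun h => hat (h ▸ hx₂)
      have hay : a ≠ y := fun h => hat (h ▸ hy₂)
      have hbx : b ≠ x := fun h => hnab (h ▸ hs₁.1 ha hx₁ hax)
      have hby : b ≠ y := fun h => hnab (h ▸ hs₁.1 ha hy₁ hay)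
      have gxa : G.Adj x a := hs₁.1 hx₁ ha (Ne.symm hax)
      have gay : G.Adj a y := hs₁.1 ha hy₁ hay
      have gyb : G.Adj y b := hs₂.1 hy₂ hb (Ne.symm hby)
      have gbx : G.Adj b x := hs₂.1 hb hx₂ hbx
      have hxyne : x ≠ y := hxy.ne
      have h1 : (G.deleteEdges {s(x, y)}).Adj x a := (hHadj x a).mpr
        ⟨gxa, by simp only [ne_eq, Sym2.eq_iff, not_or]; push_neg; tauto⟩
      have h2 : (G.deleteEdges {s(x, y)}).Adj a y := (hHadj a y).mpr
        ⟨gay, by simp only [ne_eq, Sym2.eq_iff, not_or]; push_neg; tauto⟩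
      have h3 : (G.deleteEdges {s(x, y)}).Adj y b := (hHadj y b).mpr
        ⟨gyb, by simp only [ne_eq, Sym2.eq_iff, not_or]; push_neg; tauto⟩
      have h4 : (G.deleteEdges {s(x, y)}).Adj b x := (hHadj b x).mpr
        ⟨gbx, by simp only [ne_eq, Sym2.eq_iff, not_or]; push_neg; tauto⟩
      exact four_cycle_no_chord hch hxy h1 h2 h3 h4 hab hnab
    refine ⟨s, ⟨hs, hsub (by simp), hsub (by simp)⟩, fun t ht => ?_⟩
    exact Set.Subset.antisymm (claim t s ht ⟨hs, hsub (by simp), hsub (by simp)⟩)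
      (claim s t ⟨hs, hsub (by simp), hsub (by simp)⟩ ht)
  · -- unique maximal clique ⇒ chordal deletion
    intro huniq v c hc hlen
    classical
    by_contra hno
    push_neg at hno
    -- hno : ∀ u w, Adj → mem → mem → s(u,w) ∈ c.edges
    have hsub : ∀ e ∈ c.edges, e ∈ G.edgeSet := fun e he =>
      (edgeSet_mono (G.deleteEdges_le _)) (c.edges_subset_edgeSet he)
    have hcycG : (c.transfer G hsub).IsCycle := by
      rw [SimpleGraph.Walk.isCycle_def] at hc ⊢
      refine ⟨?_, ?_, ?_⟩
      · rw [SimpleGraph.Walk.isTrail_def, SimpleGraph.Walk.edges_transfer]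
        exact hc.1.edges_nodup
      · intro h
        have h0 : c.length = 0 := by
          have := congrArg SimpleGraph.Walk.length h
          rwa [SimpleGraph.Walk.length_transfer, SimpleGraph.Walk.length_nil] at this
        omega
      · rw [SimpleGraph.Walk.support_transfer]; exact hc.2.2
    obtain ⟨u, w, huw, hu, hw, hne⟩ := hG _ hcycG
      (by rwa [SimpleGraph.Walk.length_transfer])
    rw [SimpleGraph.Walk.support_transfer] at hu hw
    rw [SimpleGraph.Walk.edges_transfer] at hne
    have hnH : ¬ (G.deleteEdges {s(x, y)}).Adj u w := fun h => hne (hno u w h hu hw)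
    have hsxy : s(u, w) = s(x, y) := by
      by_contra h
      exact hnH ((hHadj u w).mpr ⟨huw, h⟩)
    have hxmem : x ∈ c.support ∧ y ∈ c.support := by
      rw [Sym2.eq_iff] at hsxy
      rcases hsxy with ⟨rfl, rfl⟩ | ⟨rfl, rfl⟩
      · exact ⟨hu, hw⟩
      · exact ⟨hw, hu⟩
    have hcnil : c ≠ SimpleGraph.Walk.nil := (SimpleGraph.Walk.isCycle_def _ |>.mp hc).2.1
    -- rotate the cycle to start at x
    set c' := c.rotate x hxmem.1 with hc'def
    have hc' : c'.IsCycle := hc.rotate hxmem.1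
    have htailperm : List.Perm c'.support.tail c.support.tail :=
      (SimpleGraph.Walk.support_rotate c x hxmem.1).perm
    have hedgeperm : ∀ e, e ∈ c'.edges ↔ e ∈ c.edges :=
      fun e => (SimpleGraph.Walk.rotate_edges c x hxmem.1).perm.mem_iff
    have hsupmem : ∀ z, z ∈ c'.support → z ∈ c.support := by
      intro z hz
      rw [c'.support_eq_cons, List.mem_cons] at hz
      rcases hz with rfl | hz
      · exact hxmem.1
      · exact List.mem_of_mem_tail (htailperm.mem_iff.mp hz)
    have hy' : y ∈ c'.support := by
      rw [c'.support_eq_cons]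
      exact List.mem_cons_of_mem _ (htailperm.mem_iff.mpr
        (mem_tail_support_of_closed c hcnil hxmem.2))
    have hno' : ∀ u w, (G.deleteEdges {s(x, y)}).Adj u w → u ∈ c'.support →
        w ∈ c'.support → s(u, w) ∈ c'.edges := fun u w h hu hw =>
      (hedgeperm _).mpr (hno u w h (hsupmem u hu) (hsupmem w hw))
    -- split at y
    set p := c'.takeUntil y hy' with hpdef
    set q := c'.dropUntil y hy' with hqdef
    have hspec : p.append q = c' := c'.take_spec hy'
    have htailapp : c'.support.tail = p.support.tail ++ q.support.tail := by
      rw [← hspec, SimpleGraph.Walk.tail_support_append]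
    have htnd : (p.support.tail ++ q.support.tail).Nodup := by
      rw [← htailapp]; exact (SimpleGraph.Walk.isCycle_def _ |>.mp hc').2.2
    have hdisj : ∀ z, z ∈ p.support.tail → z ∈ q.support.tail → False := by
      have := (List.nodup_append.mp htnd).2.2
      exact fun z h1 h2 => this z h1 z h2 rfl
    have hxq : x ∈ q.support.tail := SimpleGraph.Walk.end_mem_tail_support_of_ne hxy.ne.symm q
    have hyp : y ∈ p.support.tail := SimpleGraph.Walk.end_mem_tail_support_of_ne hxy.ne p
    have hpnodup : p.support.Nodup := by
      rw [p.support_eq_cons, List.nodup_cons]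
      exact ⟨fun h => hdisj x h hxq, (List.nodup_append.mp htnd).1⟩
    have hqnodup : q.support.Nodup := by
      rw [q.support_eq_cons, List.nodup_cons]
      exact ⟨fun h => hdisj y hyp h, (List.nodup_append.mp htnd).2.1⟩
    have hedges : ∀ e, e ∈ c'.edges ↔ e ∈ p.edges ∨ e ∈ q.edges := by
      intro e
      rw [← hspec, SimpleGraph.Walk.edges_append, List.mem_append]
    -- members of both p and q supports are x or y
    have hboth : ∀ z, z ∈ p.support → z ∈ q.support → z = x ∨ z = y := by
      intro z hzp hzq
      rw [p.support_eq_cons, List.mem_cons] at hzp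
      rw [q.support_eq_cons, List.mem_cons] at hzq
      rcases hzp with rfl | hzp
      · exact Or.inl rfl
      rcases hzq with rfl | hzq
      · exact Or.inr rfl
      exact absurd (hdisj z hzp hzq) not_false
    have hpsub : ∀ z, z ∈ p.support → z ∈ c'.support :=
      fun z hz => c'.support_takeUntil_subset hy' hz
    have hqsub : ∀ z, z ∈ q.support → z ∈ c'.support :=
      fun z hz => c'.support_dropUntil_subset hy' hz
    -- the chord condition for p
    have hcondp : ∀ u w, G.Adj u w → u ∈ p.support → w ∈ p.support →
        s(u, w) ∈ p.edges ∨ s(u, w) = s(x, y) := by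
      intro u w huw hu hw
      by_cases heq : s(u, w) = s(x, y)
      · exact Or.inr heq
      have hH : (G.deleteEdges {s(x, y)}).Adj u w := (hHadj u w).mpr ⟨huw, heq⟩
      have hmem := hno' u w hH (hpsub u hu) (hpsub w hw)
      rcases (hedges _).mp hmem with h | h
      · exact Or.inl h
      · exfalso
        have huq : u ∈ q.support := q.fst_mem_support_of_mem_edges h
        have hwq : w ∈ q.support := q.snd_mem_support_of_mem_edges h
        have hu2 := hboth u hu huq
        have hw2 := hboth w hw hwq
        rcases hu2 with rfl | rfl <;> rcases hw2 with rfl | rfl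
        · exact huw.ne rfl
        · exact heq rfl
        · exact heq (Sym2.eq_swap)
        · exact huw.ne rfl
    have hcondq : ∀ u w, G.Adj u w → u ∈ q.reverse.support → w ∈ q.reverse.support →
        s(u, w) ∈ q.reverse.edges ∨ s(u, w) = s(x, y) := by
      intro u w huw hu hw
      rw [SimpleGraph.Walk.support_reverse, List.mem_reverse] at hu hw
      by_cases heq : s(u, w) = s(x, y)
      · exact Or.inr heq
      have hH : (G.deleteEdges {s(x, y)}).Adj u w := (hHadj u w).mpr ⟨huw, heq⟩
      have hmem := hno' u w hH (hqsub u hu) (hqsub w hw)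
      rcases (hedges _).mp hmem with h | h
      · exfalso
        have hup : u ∈ p.support := p.fst_mem_support_of_mem_edges h
        have hwp : w ∈ p.support := p.snd_mem_support_of_mem_edges h
        have hu2 := hboth u hup hu
        have hw2 := hboth w hwp hw
        rcases hu2 with rfl | rfl <;> rcases hw2 with rfl | rfl
        · exact huw.ne rfl
        · exact heq rfl
        · exact heq (Sym2.eq_swap)
        · exact huw.ne rfl
      · exact Or.inl (by rw [SimpleGraph.Walk.edges_reverse, List.mem_reverse]; exact h)
    have hqrnodup : q.reverse.support.Nodup := by
      rw [SimpleGraph.Walk.support_reverse]; exact List.nodup_reverse.mpr hqnodup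
    have hplen : p.length = 2 := key_path_length hG hxy p hpnodup hcondp
    have hqlen : q.reverse.length = 2 := key_path_length hG hxy q.reverse hqrnodup hcondq
    obtain ⟨a, ha1, ha2, hpeq⟩ := walk_length_two p hplen
    obtain ⟨b, hb1, hb2, hqeq⟩ := walk_length_two q.reverse hqlen
    -- supports
    have hps : p.support = [x, a, y] := by rw [hpeq]; simp
    have hqs : q.support = [y, b, x] := by
      have := congrArg SimpleGraph.Walk.support hqeq
      rw [SimpleGraph.Walk.support_reverse] at this
      have h2 := congrArg List.reverse this
      rw [List.reverse_reverse] at h2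
      rw [h2]; simp
    have hax : a ≠ x := ha1.ne'
    have hay : a ≠ y := ha2.ne
    have hbx : b ≠ x := hb1.ne'
    have hby : b ≠ y := hb2.ne
    have hamem : a ∈ p.support.tail := by rw [hps]; simp
    have hbmem : b ∈ q.support.tail := by rw [hqs]; simp
    have hab : a ≠ b := fun h => hdisj a hamem (h ▸ hbmem)
    -- edges of p and q
    have hpe : p.edges = [s(x, a), s(a, y)] := by rw [hpeq]; simp
    have hqe : ∀ e, e ∈ q.edges ↔ e = s(x, b) ∨ e = s(b, y) := by
      intro e
      rw [← List.mem_reverse, ← SimpleGraph.Walk.edges_reverse, hqeq]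
      simp
    -- a and b are not adjacent
    have hGxa : G.Adj x a := ((hHadj x a).mp ha1).1
    have hGay : G.Adj a y := ((hHadj a y).mp ha2).1
    have hGxb : G.Adj x b := ((hHadj x b).mp hb1).1
    have hGby : G.Adj b y := ((hHadj b y).mp hb2).1
    have hnab : ¬ G.Adj a b := by
      intro hcontra
      have hsne : s(a, b) ≠ s(x, y) := by
        simp only [ne_eq, Sym2.eq_iff, not_or]; push_neg; tauto
      have hH : (G.deleteEdges {s(x, y)}).Adj a b := (hHadj a b).mpr ⟨hcontra, hsne⟩
      have hmem := hno' a b hH (hpsub a (by rw [hps]; simp))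
        (hqsub b (by rw [hqs]; simp))
      rcases (hedges _).mp hmem with h | h
      · rw [hpe] at h
        simp only [List.mem_cons, List.not_mem_nil, or_false, Sym2.eq_iff] at h
        tauto
      · have h2 := (hqe _).mp h
        simp only [Sym2.eq_iff] at h2
        tauto
    -- build two maximal cliques
    have hcl1 : G.IsClique {x, y, a} := by
      intro u hu v hv huv
      simp only [Set.mem_insert_iff, Set.mem_singleton_iff] at hu hv
      rcases hu with rfl | rfl | rfl <;> rcases hv with rfl | rfl | rfl <;>
        first
          | exact absurd rfl huv
          | exact hxy | exact hxy.symm | exact hGxa | exact hGxa.symm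
          | exact hGay | exact hGay.symm
    have hcl2 : G.IsClique {x, y, b} := by
      intro u hu v hv huv
      simp only [Set.mem_insert_iff, Set.mem_singleton_iff] at hu hv
      rcases hu with rfl | rfl | rfl <;> rcases hv with rfl | rfl | rfl <;>
        first
          | exact absurd rfl huv
          | exact hxy | exact hxy.symm | exact hGxb | exact hGxb.symm
          | exact hGby | exact hGby.symm
    obtain ⟨s₁, hs₁, hsub₁⟩ := exists_maxClique_superset G hcl1
    obtain ⟨s₂, hs₂, hsub₂⟩ := exists_maxClique_superset G hcl2
    obtain ⟨s₀, hP₀, hun⟩ := huniq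
    have he₁ : s₁ = s₀ := hun s₁ ⟨hs₁, hsub₁ (by simp), hsub₁ (by simp)⟩
    have he₂ : s₂ = s₀ := hun s₂ ⟨hs₂, hsub₂ (by simp), hsub₂ (by simp)⟩
    have has : a ∈ s₀ := he₁ ▸ hsub₁ (by simp)
    have hbs : b ∈ s₀ := he₂ ▸ hsub₂ (by simp)
    exact hnab (hP₀.1.1 has hbs hab)
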